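/- Fix β ∈ (0,1] and w ∈ (0,1), set δ(Δ) = (Δ·log(1/Δ))^{-1/β} and v(Δ) = 1/δ(Δ) = (Δ·log(1/Δ))^{1/β}. Then lim_{Δ → 0⁺} Δ · ∫_{v(Δ)}^{1} ∫_{v(Δ)}^{1} (ρ₁ρ₂)^{-1-β} · 1_{{δ(Δ)·ρ₁·ρ₂ > w}} dρ₁ dρ₂ = 1/(β²·w^β). -/

import Mathlib

open MeasureTheory Filter Real

lemma aux_int_rpow {β : ℝ} (hβ : 0 < β) {a : ℝ} (ha : 0 < a) (ha1 : a ≤ 1) :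
    ∫ ρ in Set.Ioc a 1, ρ ^ (-1 - β) = (a ^ (-β) - 1) / β := by
  rw [← intervalIntegral.integral_of_le ha1]
  rw [integral_rpow (Or.inr ⟨by linarith, by
    simp only [Set.uIcc_of_le ha1, Set.mem_Icc, not_and, not_le]
    intro h; linarith⟩)]
  have h : (-1 - β + 1) = -β := by ring
  rw [h, Real.one_rpow]
  rw [div_neg, ← neg_div, neg_sub]

lemma aux_int_inv {a b : ℝ} (ha : 0 < a) (hab : a ≤ b) :
    ∫ ρ in Set.Ioc a b, ρ ^ (-1 : ℝ) = Real.log b - Real.log a := by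
  rw [← intervalIntegral.integral_of_le hab]
  have : ∀ x ∈ Set.uIcc a b, x ^ (-1:ℝ) = x⁻¹ := fun x _ => Real.rpow_neg_one x
  rw [intervalIntegral.integral_congr this, integral_inv (by
    simp only [Set.uIcc_of_le hab, Set.mem_Icc, not_and, not_le]
    intro h; linarith)]
  rw [Real.log_div (by linarith) (by linarith)]

lemma aux_inner {β : ℝ} (hβ : 0 < β) {v c : ℝ} (hv : 0 < v) (hv1 : v ≤ 1)
    (hc : 0 < c) (hc1 : c ≤ 1) :
    ∫ ρ in Set.Ioc v 1, (if c < ρ then ρ ^ (-1 - β) else 0)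
      = ((v ⊔ c) ^ (-β) - 1) / β := by
  have h : (fun ρ : ℝ => if c < ρ then ρ ^ (-1 - β) else 0)
      = (Set.Ioi c).indicator (fun ρ => ρ ^ (-1 - β)) := by
    funext ρ; simp [Set.indicator_apply, Set.mem_Ioi]
  rw [h, MeasureTheory.integral_indicator measurableSet_Ioi,
    Measure.restrict_restrict measurableSet_Ioi, Set.inter_comm, Set.Ioc_inter_Ioi]
  exact aux_int_rpow hβ (lt_sup_iff.mpr (Or.inl hv)) (sup_le hv1 hc1)

lemma aux_inner2 {β w : ℝ} (hβ : 0 < β) (hw0 : 0 < w) (hw1 : w < 1) {v ρ₂ : ℝ}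
    (hv : 0 < v) (hv1 : v ≤ 1) (hρ₂ : v < ρ₂) (hρ₂1 : ρ₂ ≤ 1) :
    ∫ ρ₁ in Set.Ioc v 1, (if w < v⁻¹ * ρ₁ * ρ₂ then (ρ₁ * ρ₂) ^ (-1 - β) else 0)
      = ρ₂ ^ (-1 - β) * (((v ⊔ (w * v / ρ₂)) ^ (-β) - 1) / β) := by
  have hρ₂0 : 0 < ρ₂ := hv.trans hρ₂
  have hc0 : 0 < w * v / ρ₂ := by positivity
  have hc1 : w * v / ρ₂ ≤ 1 := by
    rw [div_le_one hρ₂0]; nlinarith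
  have hpt : ∀ ρ₁ : ℝ, (if w < v⁻¹ * ρ₁ * ρ₂ then (ρ₁ * ρ₂) ^ (-1 - β) else 0)
      = ρ₂ ^ (-1 - β) * (if w * v / ρ₂ < ρ₁ then ρ₁ ^ (-1 - β) else 0) := by
    intro ρ₁
    have hiff : (w < v⁻¹ * ρ₁ * ρ₂) ↔ (w * v / ρ₂ < ρ₁) := by
      rw [show v⁻¹ * ρ₁ * ρ₂ = ρ₁ * ρ₂ / v by ring, lt_div_iff₀ hv, div_lt_iff₀ hρ₂0]
    by_cases h : w * v / ρ₂ < ρ₁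
    · rw [if_pos (hiff.mpr h), if_pos h,
        Real.mul_rpow (le_of_lt (hc0.trans h)) hρ₂0.le, mul_comm]
    · rw [if_neg (fun hh => h (hiff.mp hh)), if_neg h, mul_zero]
  rw [show (fun ρ₁ : ℝ => if w < v⁻¹ * ρ₁ * ρ₂ then (ρ₁ * ρ₂) ^ (-1 - β) else 0)
      = fun ρ₁ => ρ₂ ^ (-1 - β) * (if w * v / ρ₂ < ρ₁ then ρ₁ ^ (-1 - β) else 0)
      from funext hpt]
  rw [MeasureTheory.integral_const_mul, aux_inner hβ hv hv1 hc0 hc1]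

lemma aux_int_rpow' {β : ℝ} (hβ : 0 < β) {a b : ℝ} (ha : 0 < a) (hab : a ≤ b) :
    ∫ ρ in Set.Ioc a b, ρ ^ (-1 - β) = (a ^ (-β) - b ^ (-β)) / β := by
  rw [← intervalIntegral.integral_of_le hab]
  rw [integral_rpow (Or.inr ⟨by linarith, by
    simp only [Set.uIcc_of_le hab, Set.mem_Icc, not_and, not_le]
    intro h; linarith⟩)]
  have h : (-1 - β + 1) = -β := by ring
  rw [h, div_neg, ← neg_div, neg_sub]

lemma aux_outer {β w v : ℝ} (hβ : 0 < β) (hw0 : 0 < w) (hw1 : w < 1)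
    (hv : 0 < v) (hvw : v < w) :
    ∫ ρ₂ in Set.Ioc v 1, ρ₂ ^ (-1 - β) * (((v ⊔ (w * v / ρ₂)) ^ (-β) - 1) / β)
      = (w * v) ^ (-β) / β * (Real.log w - Real.log v)
        - 1 / β * ((v ^ (-β) - w ^ (-β)) / β)
        + (v ^ (-β) - 1) / β * ((w ^ (-β) - 1) / β) := by
  have hw1' : w ≤ 1 := hw1.le
  have hnot1 : (0:ℝ) ∉ Set.uIcc v w := by
    simp only [Set.uIcc_of_le hvw.le, Set.mem_Icc, not_and, not_le]
    intro h; linarith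
  have hnot2 : (0:ℝ) ∉ Set.uIcc w 1 := by
    simp only [Set.uIcc_of_le hw1', Set.mem_Icc, not_and, not_le]
    intro h; linarith
  -- nice functions on each piece
  set f1 : ℝ → ℝ := fun ρ => (w * v) ^ (-β) / β * ρ ^ (-1:ℝ) - 1 / β * ρ ^ (-1 - β) with hf1
  set f2 : ℝ → ℝ := fun ρ => (v ^ (-β) - 1) / β * ρ ^ (-1 - β) with hf2
  have hEq1 : Set.EqOn (fun ρ₂ : ℝ => ρ₂ ^ (-1 - β) * (((v ⊔ (w * v / ρ₂)) ^ (-β) - 1) / β))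
      f1 (Set.Ioc v w) := by
    intro ρ hρ
    obtain ⟨h1, h2⟩ := hρ
    have hρ0 : 0 < ρ := hv.trans h1
    have hsup : v ⊔ (w * v / ρ) = w * v / ρ := by
      rw [sup_eq_right, le_div_iff₀ hρ0]; nlinarith
    have hdr : (w * v / ρ) ^ (-β) = (w * v) ^ (-β) / ρ ^ (-β) :=
      Real.div_rpow (by positivity) hρ0.le _
    simp only [hf1, hsup, hdr]
    rw [show ρ ^ (-1 - β) * (((w * v) ^ (-β) / ρ ^ (-β) - 1) / β)
        = (w * v) ^ (-β) / β * (ρ ^ (-1 - β) / ρ ^ (-β)) - 1 / β * ρ ^ (-1 - β) by ring]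
    rw [← Real.rpow_sub hρ0]
    norm_num
  have hEq2 : Set.EqOn (fun ρ₂ : ℝ => ρ₂ ^ (-1 - β) * (((v ⊔ (w * v / ρ₂)) ^ (-β) - 1) / β))
      f2 (Set.Ioc w 1) := by
    intro ρ hρ
    obtain ⟨h1, h2⟩ := hρ
    have hρ0 : 0 < ρ := hw0.trans h1
    have hsup : v ⊔ (w * v / ρ) = v := by
      rw [sup_eq_left, div_le_iff₀ hρ0]; nlinarith
    simp only [hf2, hsup]
    ring
  have hi1 : IntegrableOn f1 (Set.Ioc v w) volume := by
    apply Integrable.sub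
    · exact ((intervalIntegral.intervalIntegrable_rpow (Or.inr hnot1)).1).const_mul _
    · exact ((intervalIntegral.intervalIntegrable_rpow (Or.inr hnot1)).1).const_mul _
  have hi2 : IntegrableOn f2 (Set.Ioc w 1) volume :=
    ((intervalIntegral.intervalIntegrable_rpow (Or.inr hnot2)).1).const_mul _
  rw [← Set.Ioc_union_Ioc_eq_Ioc hvw.le hw1',
    MeasureTheory.setIntegral_union (Set.Ioc_disjoint_Ioc_of_le le_rfl) measurableSet_Ioc
      (hi1.congr_fun hEq1.symm measurableSet_Ioc)
      (hi2.congr_fun hEq2.symm measurableSet_Ioc),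
    MeasureTheory.setIntegral_congr_fun measurableSet_Ioc hEq1,
    MeasureTheory.setIntegral_congr_fun measurableSet_Ioc hEq2]
  have e1 : ∫ ρ in Set.Ioc v w, f1 ρ
      = (w * v) ^ (-β) / β * (Real.log w - Real.log v)
        - 1 / β * ((v ^ (-β) - w ^ (-β)) / β) := by
    simp only [hf1]
    rw [MeasureTheory.integral_sub
      (((intervalIntegral.intervalIntegrable_rpow (Or.inr hnot1)).1).const_mul _)
      (((intervalIntegral.intervalIntegrable_rpow (Or.inr hnot1)).1).const_mul _),
      MeasureTheory.integral_const_mul, MeasureTheory.integral_const_mul,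
      aux_int_inv hv hvw.le, aux_int_rpow' hβ hv hvw.le]
  have e2 : ∫ ρ in Set.Ioc w 1, f2 ρ = (v ^ (-β) - 1) / β * ((w ^ (-β) - 1) / β) := by
    simp only [hf2]
    rw [MeasureTheory.integral_const_mul, aux_int_rpow hβ hw0 hw1']
  rw [e1, e2]

lemma aux_value {β w Δ : ℝ} (hβ : 0 < β) (hw0 : 0 < w) (hw1 : w < 1)
    (ht : 0 < Δ * Real.log (1 / Δ)) (htw : Δ * Real.log (1 / Δ) < w ^ β) :
    (∫ ρ₂ in Set.Ioc ((Δ * Real.log (1 / Δ)) ^ (1 / β)) 1,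
        ∫ ρ₁ in Set.Ioc ((Δ * Real.log (1 / Δ)) ^ (1 / β)) 1,
          if w < (Δ * Real.log (1 / Δ)) ^ (-1 / β) * ρ₁ * ρ₂ then
            (ρ₁ * ρ₂) ^ (-1 - β) else 0)
      = w ^ (-β) * (Δ * Real.log (1 / Δ))⁻¹ / β
          * (Real.log w - 1 / β * Real.log (Δ * Real.log (1 / Δ)))
        - 1 / β * (((Δ * Real.log (1 / Δ))⁻¹ - w ^ (-β)) / β)
        + ((Δ * Real.log (1 / Δ))⁻¹ - 1) / β * ((w ^ (-β) - 1) / β) := by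
  set t : ℝ := Δ * Real.log (1 / Δ) with hT
  set v : ℝ := t ^ (1 / β) with hV
  have hv0 : 0 < v := Real.rpow_pos_of_pos ht _
  have hvw : v < w := by
    have h1 : t ^ (1 / β) < (w ^ β) ^ (1 / β) :=
      Real.rpow_lt_rpow ht.le htw (by positivity)
    rwa [← Real.rpow_mul hw0.le, mul_one_div_cancel hβ.ne', Real.rpow_one] at h1
  have hv1 : v ≤ 1 := le_of_lt (hvw.trans hw1)
  have hδ : t ^ (-1 / β) = v⁻¹ := by
    rw [neg_div, Real.rpow_neg ht.le, hV]
  have hvb : v ^ (-β) = t⁻¹ := by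
    rw [hV, ← Real.rpow_mul ht.le,
      show 1 / β * (-β) = -1 by field_simp, Real.rpow_neg_one]
  have hlv : Real.log v = 1 / β * Real.log t := by
    rw [hV, Real.log_rpow ht]
  have hwv : (w * v) ^ (-β) = w ^ (-β) * t⁻¹ := by
    rw [Real.mul_rpow hw0.le hv0.le, hvb]
  simp only [hδ]
  rw [MeasureTheory.setIntegral_congr_fun measurableSet_Ioc
      (fun ρ₂ hρ₂ => aux_inner2 hβ hw0 hw1 hv0 hv1 hρ₂.1 hρ₂.2),
    aux_outer hβ hw0 hw1 hv0 hvw, hwv, hvb, hlv]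

/-- Fix `β ∈ (0,1]` and `w ∈ (0,1)`; let `δ(Δ) = (Δ log(1/Δ))^{-1/β}` and
`v(Δ) = (Δ log(1/Δ))^{1/β}`. Then
`Δ ∫_{v(Δ)}^1 ∫_{v(Δ)}^1 (ρ₁ρ₂)^{-1-β} 1_{δ(Δ)ρ₁ρ₂ > w} dρ₁ dρ₂ → 1/(β² w^β)`
as `Δ → 0⁺`. -/
theorem big_jump_levy_measure_limit {β w : ℝ} (hβ₀ : 0 < β) (hβ₁ : β ≤ 1)
    (hw₀ : 0 < w) (hw₁ : w < 1) :
    Tendsto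
      (fun Δ : ℝ =>
        Δ * ∫ ρ₂ in Set.Ioc ((Δ * Real.log (1 / Δ)) ^ (1 / β)) 1,
              ∫ ρ₁ in Set.Ioc ((Δ * Real.log (1 / Δ)) ^ (1 / β)) 1,
                if w < (Δ * Real.log (1 / Δ)) ^ (-1 / β) * ρ₁ * ρ₂ then
                  (ρ₁ * ρ₂) ^ (-1 - β) else 0)
      (nhdsWithin 0 (Set.Ioi (0:ℝ)))
      (nhds (1 / (β ^ 2 * w ^ β))) := by
  have hL : Tendsto (fun Δ : ℝ => Real.log (1 / Δ)) (nhdsWithin 0 (Set.Ioi (0:ℝ))) atTop := by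
    have h : Tendsto (fun Δ : ℝ => -Real.log Δ) (nhdsWithin 0 (Set.Ioi (0:ℝ))) atTop :=
      tendsto_neg_atBot_atTop.comp Real.tendsto_log_nhdsGT_zero
    refine h.congr fun Δ => ?_
    rw [one_div, Real.log_inv]
  have hLi : Tendsto (fun Δ : ℝ => (Real.log (1 / Δ))⁻¹)
      (nhdsWithin 0 (Set.Ioi (0:ℝ))) (nhds 0) := tendsto_inv_atTop_zero.comp hL
  have ht0 : Tendsto (fun Δ : ℝ => Δ * Real.log (1 / Δ))
      (nhdsWithin 0 (Set.Ioi (0:ℝ))) (nhds 0) := by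
    have h := (tendsto_log_mul_rpow_nhdsGT_zero one_pos).neg
    rw [neg_zero] at h
    refine h.congr fun Δ => ?_
    rw [Real.rpow_one, one_div, Real.log_inv]; ring
  have hgood : ∀ᶠ Δ in nhdsWithin 0 (Set.Ioi (0:ℝ)),
      0 < Δ ∧ Δ < 1 ∧ 0 < Real.log (1 / Δ) ∧ 0 < Δ * Real.log (1 / Δ) ∧
        Δ * Real.log (1 / Δ) < w ^ β := by
    have h1 : ∀ᶠ Δ in nhdsWithin 0 (Set.Ioi (0:ℝ)), Δ ∈ Set.Ioo (0:ℝ) 1 :=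
      Filter.eventually_of_mem (Ioo_mem_nhdsGT one_pos) fun Δ hΔ => hΔ
    have h2 : ∀ᶠ Δ in nhdsWithin 0 (Set.Ioi (0:ℝ)),
        Δ * Real.log (1 / Δ) < w ^ β :=
      ht0.eventually_lt_const (Real.rpow_pos_of_pos hw₀ β)
    filter_upwards [h1, h2] with Δ hΔ h2
    have hlog : 0 < Real.log (1 / Δ) := by
      rw [one_div, Real.log_inv]
      have := Real.log_neg hΔ.1 hΔ.2
      linarith
    exact ⟨hΔ.1, hΔ.2, hlog, mul_pos hΔ.1 hlog, h2⟩
  have hlogt : Tendsto (fun Δ : ℝ => Real.log (Δ * Real.log (1 / Δ)) * (Real.log (1 / Δ))⁻¹)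
      (nhdsWithin 0 (Set.Ioi (0:ℝ))) (nhds (-1)) := by
    have hll : Tendsto (fun Δ : ℝ => Real.log (Real.log (1 / Δ)) * (Real.log (1 / Δ))⁻¹)
        (nhdsWithin 0 (Set.Ioi (0:ℝ))) (nhds 0) := by
      have h := Real.isLittleO_log_id_atTop.tendsto_div_nhds_zero
      refine (h.comp hL).congr fun Δ => ?_
      simp [div_eq_mul_inv, Function.comp]
    have base := (tendsto_const_nhds (α := ℝ) (x := (-1:ℝ))).add hll
    rw [add_zero] at base
    refine Tendsto.congr' ?_ base
    filter_upwards [hgood] with Δ hΔ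
    obtain ⟨hΔ0, hΔ1, hlog, -, -⟩ := hΔ
    have hlogΔ : Real.log Δ ≠ 0 := by
      have := Real.log_neg hΔ0 hΔ1; linarith
    rw [Real.log_mul hΔ0.ne' hlog.ne', add_mul]
    congr 1
    rw [one_div, Real.log_inv, inv_neg, mul_neg, mul_inv_cancel₀ hlogΔ]
  have hid : Tendsto (fun Δ : ℝ => Δ) (nhdsWithin 0 (Set.Ioi (0:ℝ))) (nhds 0) :=
    tendsto_id.mono_left nhdsWithin_le_nhds
  have hG : Tendsto (fun Δ : ℝ =>
      w ^ (-β) / β * ((Real.log (1 / Δ))⁻¹ * Real.log w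
          - 1 / β * (Real.log (Δ * Real.log (1 / Δ)) * (Real.log (1 / Δ))⁻¹))
        - 1 / β * (((Real.log (1 / Δ))⁻¹ - Δ * w ^ (-β)) / β)
        + ((Real.log (1 / Δ))⁻¹ - Δ) / β * ((w ^ (-β) - 1) / β))
      (nhdsWithin 0 (Set.Ioi (0:ℝ)))
      (nhds (w ^ (-β) / β * ((0:ℝ) * Real.log w - 1 / β * (-1))
        - 1 / β * (((0:ℝ) - 0 * w ^ (-β)) / β) + ((0:ℝ) - 0) / β * ((w ^ (-β) - 1) / β))) := by
    exact ((tendsto_const_nhds.mul ((hLi.mul tendsto_const_nhds).sub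
        (tendsto_const_nhds.mul hlogt))).sub
      (tendsto_const_nhds.mul ((hLi.sub (hid.mul tendsto_const_nhds)).div_const β))).add
      (((hLi.sub hid).div_const β).mul tendsto_const_nhds)
  have hval : (w ^ (-β) / β * ((0:ℝ) * Real.log w - 1 / β * (-1))
        - 1 / β * (((0:ℝ) - 0 * w ^ (-β)) / β) + ((0:ℝ) - 0) / β * ((w ^ (-β) - 1) / β))
      = 1 / (β ^ 2 * w ^ β) := by
    rw [Real.rpow_neg hw₀.le]
    field_simp
    ring
  rw [← hval]
  refine Tendsto.congr' ?_ hG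
  filter_upwards [hgood] with Δ hΔ
  obtain ⟨hΔ0, hΔ1, hlog, ht, htw⟩ := hΔ
  rw [aux_value hβ₀ hw₀ hw₁ ht htw]
  have h1 : (Δ * Real.log (1 / Δ))⁻¹ = Δ⁻¹ * (Real.log (1 / Δ))⁻¹ := mul_inv _ _
  rw [h1]
  field_simp
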